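/- arXiv:1011.5358 — 3 statements merged into one kernel-verified Lean document; each statement's English description precedes it below -/
import Mathlib

section
/- For m ≥ 2 odd and t ≥ 1, the expected Coxeter length of a product of t independent uniformly random reflections in the dihedral group I_2(m) equals m/2 - (-1)^t/(2m). -/
open Classical

/-- Minimal length of a word over `S` whose product is `w`. -/
noncomputable def wordLength {G : Type*} [Group G] (S : Set G) (w : G) : ℕ :=
  sInf {k | ∃ l : List G, l.length = k ∧ (∀ x ∈ l, x ∈ S) ∧ l.prod = w}

/-- The two Coxeter generators (simple reflections) of the dihedral group `I₂(m)`. -/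
def dihedralGens (m : ℕ) : Set (DihedralGroup m) :=
  {DihedralGroup.sr 0, DihedralGroup.sr 1}

/-- Coxeter length in the dihedral group `I₂(m)`. -/
noncomputable def dLen (m : ℕ) (w : DihedralGroup m) : ℕ :=
  wordLength (dihedralGens m) w

/-- The set of reflections (conjugates of the generators) in `I₂(m)`. -/
def dihedralRefl (m : ℕ) : Set (DihedralGroup m) :=
  {w | ∃ g s, s ∈ dihedralGens m ∧ w = g * s * g⁻¹}

/-- Expected Coxeter length of a product of `t` independent uniformly random
reflections in `I₂(m)`. -/
noncomputable def dihedralExpLen (m t : ℕ) [NeZero m] : ℝ :=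
  (∑ f ∈ Finset.univ.filter (fun f : Fin t → DihedralGroup m => ∀ i, f i ∈ dihedralRefl m),
      (dLen m (List.ofFn f).prod : ℝ)) /
    ((Finset.univ.filter (fun w : DihedralGroup m => w ∈ dihedralRefl m)).card : ℝ) ^ t


open DihedralGroup Finset

variable {m : ℕ} [NeZero m]

def phi : DihedralGroup m → ℕ
  | .r k => 2 * min k.val (-k).val
  | .sr k => 2 * min (-k).val (k - 1).val + 1

lemma negval (k : ZMod m) : (-k).val = if k.val = 0 then 0 else m - k.val := by
  rw [ZMod.neg_val]; simp [← ZMod.val_eq_zero]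

lemma suboneval (hm : 2 ≤ m) (k : ZMod m) :
    (k - 1).val = if k.val = 0 then m - 1 else k.val - 1 := by
  have h1 : ((-1 : ZMod m)).val = m - 1 := by
    rw [ZMod.neg_val, if_neg, ZMod.val_one'' (by omega)]
    intro h
    have := congrArg ZMod.val h
    rw [ZMod.val_one'' (by omega), ZMod.val_zero] at this
    omega
  have hk := ZMod.val_lt k
  rw [sub_eq_add_neg, ZMod.val_add, h1]
  split_ifs with h0
  · rw [h0, zero_add, Nat.mod_eq_of_lt (by omega)]
  · rw [show k.val + (m - 1) = (k.val - 1) + 1 * m by omega,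
      Nat.add_mul_mod_self_right, Nat.mod_eq_of_lt (by omega)]

lemma phi_step (hm : 2 ≤ m) (s : DihedralGroup m) (hs : s ∈ dihedralGens m)
    (w : DihedralGroup m) : phi (s * w) ≤ phi w + 1 := by
  have hs' : s = sr 0 ∨ s = sr 1 := hs
  rcases hs' with rfl | rfl <;> rcases w with j | j
  · -- sr 0 * r j = sr (0 + j) = sr j
    rw [sr_mul_r, zero_add]
    have h1 := ZMod.val_lt j
    have h2 := negval j
    have h3 := suboneval hm j
    simp only [phi]
    split_ifs at h2 h3 <;> omega
  · -- sr 0 * sr j = r (j - 0) = r j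
    rw [sr_mul_sr, sub_zero]
    have h1 := ZMod.val_lt j
    have h2 := negval j
    have h3 := suboneval hm j
    simp only [phi]
    split_ifs at h2 h3 <;> omega
  · -- sr 1 * r j = sr (1 + j)
    rw [sr_mul_r]
    have e1 : ((1 + j : ZMod m) - 1) = j := by ring
    have e2 : (-(1 + j) : ZMod m) = (-j) - 1 := by ring
    simp only [phi, e1, e2]
    have h1 := ZMod.val_lt j
    have h1' := ZMod.val_lt (-j)
    have h2 := negval j
    have h3 := suboneval hm (-j)
    split_ifs at h2 h3 <;> omega
  · -- sr 1 * sr j = r (j - 1)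
    rw [sr_mul_sr]
    have e1 : (-(j - 1) : ZMod m) = -(j - 1) := rfl
    simp only [phi]
    have h1 := ZMod.val_lt j
    have h1' := ZMod.val_lt (j - 1)
    have h2 := negval j
    have h3 := suboneval hm j
    have h4 := negval (j - 1)
    split_ifs at h2 h3 h4 <;> omega

lemma phi_one : phi (1 : DihedralGroup m) = 0 := by
  show phi (r 0) = 0
  simp [phi]

lemma phi_le (hm : 2 ≤ m) (l : List (DihedralGroup m))
    (hl : ∀ x ∈ l, x ∈ dihedralGens m) : phi l.prod ≤ l.length := by
  induction l with
  | nil => simp [phi_one]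
  | cons s l ih =>
    rw [List.prod_cons]
    have := phi_step hm s (hl s (by simp)) l.prod
    have := ih (fun x hx => hl x (by simp [hx]))
    simp only [List.length_cons]
    omega

/-- word with product `r j`, length `2j` -/
def wA : ℕ → List (DihedralGroup m)
  | 0 => []
  | j + 1 => sr 0 :: sr 1 :: wA j

/-- word with product `r (-j)`, length `2j` -/
def wB : ℕ → List (DihedralGroup m)
  | 0 => []
  | j + 1 => sr 1 :: sr 0 :: wB j

lemma wA_spec (j : ℕ) : (wA j : List (DihedralGroup m)).length = 2 * j ∧
    (∀ x ∈ (wA j : List (DihedralGroup m)), x ∈ dihedralGens m) ∧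
    (wA j : List (DihedralGroup m)).prod = r (j : ZMod m) := by
  induction j with
  | zero => simp [wA]
  | succ j ih =>
    obtain ⟨h1, h2, h3⟩ := ih
    refine ⟨by simp [wA, h1]; omega, ?_, ?_⟩
    · intro x hx
      simp only [wA, List.mem_cons] at hx
      rcases hx with rfl | rfl | hx
      · exact Or.inl rfl
      · exact Or.inr rfl
      · exact h2 x hx
    · simp only [wA, List.prod_cons, h3, sr_mul_r, sr_mul_sr]
      push_cast
      ring_nf

lemma wB_spec (j : ℕ) : (wB j : List (DihedralGroup m)).length = 2 * j ∧
    (∀ x ∈ (wB j : List (DihedralGroup m)), x ∈ dihedralGens m) ∧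
    (wB j : List (DihedralGroup m)).prod = r (-(j : ZMod m)) := by
  induction j with
  | zero => simp [wB]
  | succ j ih =>
    obtain ⟨h1, h2, h3⟩ := ih
    refine ⟨by simp [wB, h1]; omega, ?_, ?_⟩
    · intro x hx
      simp only [wB, List.mem_cons] at hx
      rcases hx with rfl | rfl | hx
      · exact Or.inr rfl
      · exact Or.inl rfl
      · exact h2 x hx
    · simp only [wB, List.prod_cons, h3, sr_mul_r, sr_mul_sr]
      push_cast
      ring_nf

lemma dLen_eq_phi (hm : 2 ≤ m) (w : DihedralGroup m) : dLen m w = phi w := by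
  have hwit : ∃ l : List (DihedralGroup m),
      l.length = phi w ∧ (∀ x ∈ l, x ∈ dihedralGens m) ∧ l.prod = w := by
    rcases w with k | k
    · by_cases h : k.val ≤ (-k).val
      · obtain ⟨h1, h2, h3⟩ := wA_spec (m := m) k.val
        exact ⟨wA k.val, by simp [phi, min_eq_left h, h1],
          h2, by rw [h3, ZMod.natCast_zmod_val]⟩
      · obtain ⟨h1, h2, h3⟩ := wB_spec (m := m) (-k).val
        exact ⟨wB (-k).val, by simp [phi, min_eq_right (le_of_not_ge h), h1],
          h2, by rw [h3, ZMod.natCast_zmod_val, neg_neg]⟩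
    · by_cases h : (-k).val ≤ (k - 1).val
      · obtain ⟨h1, h2, h3⟩ := wA_spec (m := m) (-k).val
        refine ⟨wA (-k).val ++ [sr 0], ?_, ?_, ?_⟩
        · simp [h1, phi, min_eq_left h]
        · intro x hx
          rcases List.mem_append.1 hx with hx | hx
          · exact h2 x hx
          · simp at hx; exact hx ▸ Or.inl rfl
        · rw [List.prod_append, List.prod_singleton, h3, ZMod.natCast_zmod_val,
            r_mul_sr]
          ring_nf
      · obtain ⟨h1, h2, h3⟩ := wB_spec (m := m) (k - 1).val
        refine ⟨wB (k - 1).val ++ [sr 1], ?_, ?_, ?_⟩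
        · simp [h1, phi, min_eq_right (le_of_not_ge h)]
        · intro x hx
          rcases List.mem_append.1 hx with hx | hx
          · exact h2 x hx
          · simp at hx; exact hx ▸ Or.inr rfl
        · rw [List.prod_append, List.prod_singleton, h3, ZMod.natCast_zmod_val,
            r_mul_sr]
          ring_nf
  obtain ⟨l, hl1, hl2, hl3⟩ := hwit
  refine le_antisymm (Nat.sInf_le ⟨l, hl1, hl2, hl3⟩) ?_
  refine le_csInf ⟨phi w, l, hl1, hl2, hl3⟩ ?_
  rintro b ⟨l', rfl, hl2', hl3'⟩
  exact hl3' ▸ phi_le hm l' hl2'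

lemma sum_min_even (n : ℕ) : ∑ i ∈ range (2 * n + 1), min i (2 * n - i) = n * n := by
  induction n with
  | zero => simp
  | succ n ih =>
    have e : 2 * (n + 1) + 1 = (2 * n + 2) + 1 := by ring
    rw [e, Finset.sum_range_succ, Finset.sum_range_succ']
    have e2 : ∀ i ∈ range (2 * n + 1),
        min (i + 1) (2 * (n + 1) - (i + 1)) = min i (2 * n - i) + 1 := by
      intro i hi
      simp only [mem_range] at hi
      omega
    rw [Finset.sum_congr rfl e2, Finset.sum_add_distrib, ih]
    simp [Finset.card_range]
    ring_nf
    omega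

lemma sum_min_odd (n : ℕ) : ∑ i ∈ range (2 * n + 1), min i (2 * n + 1 - i) = n * (n + 1) := by
  induction n with
  | zero => simp
  | succ n ih =>
    have e : 2 * (n + 1) + 1 = (2 * n + 2) + 1 := by ring
    rw [e, Finset.sum_range_succ, Finset.sum_range_succ']
    have e2 : ∀ i ∈ range (2 * n + 1),
        min (i + 1) (2 * n + 2 + 1 - (i + 1)) = min i (2 * n + 1 - i) + 1 := by
      intro i hi
      simp only [mem_range] at hi
      omega
    rw [Finset.sum_congr rfl e2, Finset.sum_add_distrib, ih]
    simp [Finset.card_range]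
    ring_nf

lemma val_sum (f : ℕ → ℕ) : ∑ k : ZMod m, f k.val = ∑ i ∈ range m, f i := by
  refine Finset.sum_nbij' (i := fun k : ZMod m => k.val) (j := fun i : ℕ => (i : ZMod m))
    ?_ ?_ ?_ ?_ ?_
  · intro k _; simp [ZMod.val_lt]
  · intro i hi; simp
  · intro k _; simp [ZMod.natCast_zmod_val]
  · intro i hi; simp only [mem_range] at hi
    show ((i : ZMod m)).val = i
    exact ZMod.val_natCast_of_lt hi
  · intro k _; rfl

lemma sum_phi_sr (n : ℕ) (hn : m = 2 * n + 1) :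
    ∑ k : ZMod m, phi (sr k) = 2 * (n * n) + m := by
  have hm : 2 ≤ m ∨ m = 1 := by omega
  have step1 : ∀ k : ZMod m, phi (sr k) = 2 * min (-k).val (m - 1 - (-k).val) + 1 := by
    intro k
    rcases hm with hm | hm
    · have h2 := negval k
      have h3 := suboneval hm k
      have h4 := ZMod.val_lt k
      simp only [phi]
      split_ifs at h2 h3 <;> congr 1 <;> omega
    · subst hm
      simp only [phi]
      have : ∀ a : ZMod 1, a.val = 0 := fun a => by have := ZMod.val_lt a; omega
      simp [this]
  simp only [step1]
  rw [show ∑ k : ZMod m, (2 * min (-k).val (m - 1 - (-k).val) + 1) =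
      ∑ k : ZMod m, (2 * min k.val (m - 1 - k.val) + 1) from
    Equiv.sum_comp (Equiv.neg (ZMod m)) (fun k => 2 * min k.val (m - 1 - k.val) + 1)]
  rw [val_sum (fun i => 2 * min i (m - 1 - i) + 1), Finset.sum_add_distrib,
    ← Finset.mul_sum, Finset.sum_const, Finset.card_range]
  have : ∀ i ∈ range m, min i (m - 1 - i) = min i (2 * n - i) := by
    intro i _; omega
  rw [Finset.sum_congr rfl this]
  rw [hn, sum_min_even]
  simp [hn]

lemma sum_phi_r (n : ℕ) (hn : m = 2 * n + 1) :
    ∑ k : ZMod m, phi (r k) = 2 * (n * (n + 1)) := by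
  have step1 : ∀ k : ZMod m, phi (r k) = 2 * min k.val (m - k.val) := by
    intro k
    have h2 := negval k
    have h4 := ZMod.val_lt k
    simp only [phi]
    split_ifs at h2 <;> congr 1 <;> omega
  simp only [step1]
  rw [show (∑ k : ZMod m, 2 * min k.val (m - k.val)) =
      ∑ k : ZMod m, (fun i => 2 * min i (m - i)) k.val from rfl,
    val_sum (fun i => 2 * min i (m - i)), ← Finset.mul_sum]
  subst hn
  rw [sum_min_odd n]

/-- sr is injective -/
lemma sr_inj : Function.Injective (sr : ZMod m → DihedralGroup m) := by
  intro a b h; injection h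

lemma inv_r (i : ZMod m) : (r i)⁻¹ = r (-i) := by
  rw [eq_comm, eq_inv_iff_mul_eq_one, r_mul_r, neg_add_cancel, one_def]

lemma inv_sr (i : ZMod m) : (sr i)⁻¹ = sr i := by
  rw [eq_comm, eq_inv_iff_mul_eq_one]; exact sr_mul_self i

lemma refl_char (n : ℕ) (hn : m = 2 * n + 1) (w : DihedralGroup m) :
    w ∈ dihedralRefl m ↔ ∃ k, w = sr k := by
  constructor
  · rintro ⟨g, s, hs, rfl⟩
    have hs' : s = sr 0 ∨ s = sr 1 := hs
    rcases hs' with rfl | rfl <;> rcases g with i | i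
    · exact ⟨_, by rw [inv_r, r_mul_sr, sr_mul_r]⟩
    · exact ⟨_, by rw [inv_sr, sr_mul_sr, r_mul_sr]⟩
    · exact ⟨_, by rw [inv_r, r_mul_sr, sr_mul_r]⟩
    · exact ⟨_, by rw [inv_sr, sr_mul_sr, r_mul_sr]⟩
  · rintro ⟨k, rfl⟩
    have hc : (2 : ZMod m) * ((n : ZMod m) + 1) = 1 := by
      have : ((2 * n + 2 : ℕ) : ZMod m) = ((1 : ℕ) : ZMod m) := by
        rw [show 2 * n + 2 = 1 + (2 * n + 1) from by omega, ← hn]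
        simp
      push_cast at this
      linear_combination this
    refine ⟨r (-(((n : ZMod m) + 1) * k)), sr 0, Or.inl rfl, ?_⟩
    have : (r (-(((n : ZMod m) + 1) * k)))⁻¹ = r (((n : ZMod m) + 1) * k) := by
      rw [eq_comm, eq_inv_iff_mul_eq_one, r_mul_r, add_neg_cancel, one_def]
    rw [this, r_mul_sr, sr_mul_r]
    congr 1
    have : k = 2 * (((n : ZMod m) + 1) * k) := by
      rw [← mul_assoc, hc, one_mul]
    linear_combination this

def isRot : DihedralGroup m → Bool
  | .r _ => true
  | .sr _ => false

lemma isRot_sr_mul (k : ZMod m) (w : DihedralGroup m) :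
    isRot (sr k * w) = !isRot w := by
  rcases w with i | i <;> rfl

lemma key_sum (hm : 2 ≤ m) (w : DihedralGroup m) :
    ∑ k : ZMod m, dLen m (sr k * w) =
      if isRot w then ∑ k : ZMod m, dLen m (sr k) else ∑ k : ZMod m, dLen m (r k) := by
  rcases w with i | i
  · simp only [sr_mul_r, isRot, if_true]
    exact Equiv.sum_comp (Equiv.addRight i) (fun k => dLen m (sr k))
  · simp only [sr_mul_sr, isRot, if_false]
    exact Equiv.sum_comp (Equiv.subLeft i) (fun k => dLen m (r k))

lemma isRot_prod (t : ℕ) (g : Fin t → ZMod m) :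
    isRot (List.ofFn (fun i => sr (g i))).prod = decide (Even t) := by
  induction t with
  | zero => simp [isRot, ← r_zero]
  | succ t ih =>
    rw [List.ofFn_succ, List.prod_cons, isRot_sr_mul, ih (fun i => g i.succ)]
    simp only [Nat.even_add_one]
    by_cases h : Even t <;> simp [h]

lemma tuple_sum (hm : 2 ≤ m) (t : ℕ) :
    ∑ g : Fin (t + 1) → ZMod m, dLen m (List.ofFn (fun i => sr (g i))).prod =
      m ^ t * (if Even (t + 1) then ∑ k : ZMod m, dLen m (r k)
        else ∑ k : ZMod m, dLen m (sr k)) := by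
  rw [← (Fin.consEquiv (fun _ : Fin (t + 1) => ZMod m)).sum_comp
    (fun g => dLen m (List.ofFn (fun i => sr (g i))).prod)]
  rw [Fintype.sum_prod_type]
  have e1 : ∀ (k : ZMod m) (g : Fin t → ZMod m),
      (List.ofFn (fun i => sr ((Fin.consEquiv (fun _ : Fin (t + 1) => ZMod m)) (k, g) i))).prod
        = sr k * (List.ofFn (fun i => sr (g i))).prod := by
    intro k g
    rw [List.ofFn_succ, List.prod_cons]
    rfl
  simp only [e1]
  rw [Finset.sum_comm]
  have e2 : ∀ g : Fin t → ZMod m,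
      ∑ k : ZMod m, dLen m (sr k * (List.ofFn (fun i => sr (g i))).prod) =
        if Even (t + 1) then ∑ k : ZMod m, dLen m (r k)
          else ∑ k : ZMod m, dLen m (sr k) := by
    intro g
    rw [key_sum hm, isRot_prod]
    rcases Nat.even_or_odd t with h | h
    · simp [h, Nat.even_add_one]
    · simp [Nat.not_even_iff_odd.mpr h, Nat.even_add_one]
  rw [Finset.sum_congr rfl (fun g _ => e2 g), Finset.sum_const, Finset.card_univ]
  simp [ZMod.card]

lemma filter_refl_eq (n : ℕ) (hn : m = 2 * n + 1) :
    Finset.univ.filter (fun w : DihedralGroup m => w ∈ dihedralRefl m) =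
      Finset.univ.image (sr : ZMod m → DihedralGroup m) := by
  ext w
  simp only [Finset.mem_filter, Finset.mem_univ, true_and, Finset.mem_image]
  rw [refl_char n hn]
  constructor
  · rintro ⟨k, rfl⟩; exact ⟨k, rfl⟩
  · rintro ⟨k, rfl⟩; exact ⟨k, rfl⟩

lemma card_refl (n : ℕ) (hn : m = 2 * n + 1) :
    (Finset.univ.filter (fun w : DihedralGroup m => w ∈ dihedralRefl m)).card = m := by
  rw [filter_refl_eq n hn, Finset.card_image_of_injective _ sr_inj, Finset.card_univ,
    ZMod.card]

lemma filter_tuple_eq (n : ℕ) (hn : m = 2 * n + 1) (t : ℕ) :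
    Finset.univ.filter (fun f : Fin t → DihedralGroup m => ∀ i, f i ∈ dihedralRefl m) =
      Finset.univ.image (fun g : Fin t → ZMod m => fun i => sr (g i)) := by
  ext f
  simp only [Finset.mem_filter, Finset.mem_univ, true_and, Finset.mem_image]
  constructor
  · intro hf
    have : ∀ i, ∃ k, f i = sr k := fun i => (refl_char n hn (f i)).mp (hf i)
    choose g hg using this
    exact ⟨g, funext fun i => (hg i).symm⟩
  · rintro ⟨g, rfl⟩ i
    exact (refl_char n hn _).mpr ⟨g i, rfl⟩

lemma J_inj (t : ℕ) :
    Function.Injective (fun g : Fin t → ZMod m => fun i => (sr (g i) : DihedralGroup m)) := by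
  intro a b h
  funext i
  exact sr_inj (congrFun h i)

theorem expected_length_reflections_dihedral_odd (m t : ℕ) [NeZero m]
    (hm : 2 ≤ m) (hmo : Odd m) (ht : 1 ≤ t) :
    dihedralExpLen m t = (m : ℝ) / 2 - (-1 : ℝ) ^ t / (2 * m) := by
  obtain ⟨n, hn⟩ := hmo
  have hn' : m = 2 * n + 1 := by omega
  obtain ⟨t', rfl⟩ : ∃ t', t = t' + 1 := ⟨t - 1, by omega⟩
  unfold dihedralExpLen
  rw [card_refl n hn', filter_tuple_eq n hn',
    Finset.sum_image (fun a _ b _ h => J_inj (t' + 1) h)]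
  rw [← Nat.cast_sum]
  rw [tuple_sum hm t']
  have hsr : ∑ k : ZMod m, dLen m (sr k) = 2 * (n * n) + m := by
    rw [Finset.sum_congr rfl (fun k _ => dLen_eq_phi hm (sr k)), sum_phi_sr n hn']
  have hr : ∑ k : ZMod m, dLen m (r k) = 2 * (n * (n + 1)) := by
    rw [Finset.sum_congr rfl (fun k _ => dLen_eq_phi hm (r k)), sum_phi_r n hn']
  have hm0 : (m : ℝ) ≠ 0 := Nat.cast_ne_zero.mpr (by omega)
  have hmp : (m : ℝ) ^ t' ≠ 0 := pow_ne_zero _ hm0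
  have hcast : (m : ℝ) = 2 * n + 1 := by rw [hn']; push_cast; ring
  rcases Nat.even_or_odd (t' + 1) with h | h
  · rw [if_pos h, hr, h.neg_one_pow]
    push_cast
    rw [pow_succ, mul_div_mul_left _ _ hmp, hcast]
    field_simp
    ring
  · rw [if_neg (Nat.not_even_iff_odd.mpr h), hsr, h.neg_one_pow]
    push_cast
    rw [pow_succ, mul_div_mul_left _ _ hmp, hcast]
    field_simp
    ring
end

section
/- For m ≥ 2 and even t ≥ 0, the expected absolute length of a product of t independent uniformly random simple reflections in I_2(m) equals 2 - (1/2^{t-1}) ∑_{|k| ≤ ⌊t/(2m)⌋} C(t, t/2 - km); for odd t it equals 1. -/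
open Classical

/-- Absolute length in the dihedral group `I₂(m)`. -/
noncomputable def dAbsLen (m : ℕ) (w : DihedralGroup m) : ℕ :=
  wordLength (dihedralRefl m) w

/-- A uniformly random choice from the two simple reflections, encoded by a boolean. -/
def dihedralGen (m : ℕ) (b : Bool) : DihedralGroup m :=
  if b then DihedralGroup.sr 1 else DihedralGroup.sr 0

/-- Expected absolute length of a product of `t` independent uniformly random
simple reflections of `I₂(m)`. -/
noncomputable def dihedralExpAbsLenS (m t : ℕ) : ℝ :=
  (∑ f : Fin t → Bool, (dAbsLen m (List.ofFn (fun i => dihedralGen m (f i))).prod : ℝ)) / 2 ^ t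

open DihedralGroup

lemma mem_refl_iff (m : ℕ) [NeZero m] (w : DihedralGroup m) :
    w ∈ dihedralRefl m ↔ ∃ j, w = sr j := by
  constructor
  · rintro ⟨g, s, hs, rfl⟩
    rcases hs with h | h <;> subst h <;> rcases g with a | a <;> exact ⟨_, rfl⟩
  · rintro ⟨j, rfl⟩
    rcases Nat.even_or_odd j.val with ⟨a, ha⟩ | ⟨a, ha⟩
    · refine ⟨r (-(a : ZMod m)), sr 0, Or.inl rfl, ?_⟩
      show sr j = r (-(a:ZMod m)) * sr 0 * r (-(-(a:ZMod m)))
      show sr j = sr (0 - -(a:ZMod m) + - -(a:ZMod m))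
      congr 1
      have hj : j = ((2*a : ℕ) : ZMod m) := by
        rw [two_mul, ← ha, ZMod.natCast_val, ZMod.cast_id]
      rw [hj]; push_cast; ring
    · refine ⟨r (-(a : ZMod m)), sr 1, Or.inr rfl, ?_⟩
      show sr j = r (-(a:ZMod m)) * sr 1 * r (-(-(a:ZMod m)))
      show sr j = sr (1 - -(a:ZMod m) + - -(a:ZMod m))
      congr 1
      have hj : j = ((2*a+1 : ℕ) : ZMod m) := by
        rw [← ha, ZMod.natCast_val, ZMod.cast_id]
      rw [hj]; push_cast; ring

lemma prod_refl_parity (m : ℕ) (l : List (DihedralGroup m)) (h : ∀ x ∈ l, ∃ j, x = sr j) :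
    (Even l.length → ∃ j, l.prod = r j) ∧ (Odd l.length → ∃ j, l.prod = sr j) := by
  induction l with
  | nil => exact ⟨fun _ => ⟨0, by simp [one_def, -r_zero]⟩, fun h => by simp at h⟩
  | cons a l ih =>
    obtain ⟨j, rfl⟩ := h a (List.mem_cons_self)
    have ih := ih (fun x hx => h x (List.mem_cons_of_mem _ hx))
    constructor
    · intro he
      have ho : Odd l.length := by
        rw [Nat.odd_iff]; rw [List.length_cons, Nat.even_add_one, Nat.not_even_iff] at he; omega
      obtain ⟨x, hx⟩ := ih.2 ho
      refine ⟨x - j, by rw [List.prod_cons, hx]; rfl⟩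
    · intro ho
      have he : Even l.length := by
        rw [Nat.even_iff]; rw [List.length_cons, Nat.odd_iff] at ho; omega
      obtain ⟨x, hx⟩ := ih.1 he
      refine ⟨j + x, by rw [List.prod_cons, hx]; rfl⟩

lemma dAbsLen_sr (m : ℕ) [NeZero m] (j : ZMod m) : dAbsLen m (sr j) = 1 := by
  have h1 : 1 ∈ {k | ∃ l : List (DihedralGroup m), l.length = k ∧ (∀ x ∈ l, x ∈ dihedralRefl m) ∧ l.prod = sr j} :=
    ⟨[sr j], rfl, by simp [mem_refl_iff], by simp⟩
  have hle : dAbsLen m (sr j) ≤ 1 := Nat.sInf_le h1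
  have hne : dAbsLen m (sr j) ≠ 0 := by
    intro h0
    have := Nat.sInf_mem (⟨1, h1⟩ : Set.Nonempty _)
    rw [show sInf _ = dAbsLen m (sr j) from rfl, h0] at this
    obtain ⟨l, hl, _, hp⟩ := this
    rw [List.length_eq_zero_iff.mp hl] at hp
    simp [one_def, -r_zero] at hp
  omega

lemma dAbsLen_r (m : ℕ) [NeZero m] (j : ZMod m) : dAbsLen m (r j) = if j = 0 then 0 else 2 := by
  split_ifs with hj
  · subst hj
    exact Nat.sInf_eq_zero.mpr (Or.inl ⟨[], rfl, by simp, by simp [one_def, -r_zero]⟩)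
  · have h2 : 2 ∈ {k | ∃ l : List (DihedralGroup m), l.length = k ∧ (∀ x ∈ l, x ∈ dihedralRefl m) ∧ l.prod = r j} := by
      refine ⟨[sr 0, sr j], rfl, by simp [mem_refl_iff], ?_⟩
      show sr 0 * (sr j * 1) = r j
      rw [mul_one]
      show r (j - 0) = r j
      rw [sub_zero]
    have hle : dAbsLen m (r j) ≤ 2 := Nat.sInf_le h2
    obtain ⟨l, hl, hmem', hp⟩ := Nat.sInf_mem (⟨2, h2⟩ : Set.Nonempty _)
    have hsr : ∀ x ∈ l, ∃ i, x = sr i := fun x hx => (mem_refl_iff m x).mp (hmem' x hx)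
    match l, hl with
    | [], hl => simp [one_def, -r_zero] at hp; exact absurd hp.symm hj
    | [x], hl =>
      obtain ⟨i, rfl⟩ := hsr x (by simp)
      simp at hp
    | (x :: y :: l), hl =>
      have h3 : dAbsLen m (r j) = (x :: y :: l).length := hl.symm
      simp only [List.length_cons] at h3
      omega

def W {k : ℕ} (f : Fin k → Bool) : ℕ := ∑ i, if f i then 1 else 0

def eflip {k : ℕ} (f : Fin k → Bool) : Fin k → Bool := fun i => if Even i.val then !(f i) else f i

lemma key (m : ℕ) : ∀ (n : ℕ) (f : Fin (2*n) → Bool),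
    (List.ofFn fun i => dihedralGen m (f i)).prod = r ((W (eflip f) : ZMod m) - (n : ZMod m)) := by
  intro n
  induction n with
  | zero =>
    intro f
    have h0 : (List.ofFn fun i => dihedralGen m (f i)) = [] :=
      List.eq_nil_of_length_eq_zero (by simp)
    rw [h0]
    simp [W, one_def, -r_zero, eflip]
  | succ n ih =>
    intro f
    show (List.ofFn fun i : Fin (2*n+1+1) => dihedralGen m (f i)).prod = _
    rw [List.ofFn_succ, List.ofFn_succ, List.prod_cons, List.prod_cons]
    have ihf := ih (fun i => f i.succ.succ)
    rw [show (List.ofFn fun i : Fin (2*n) => dihedralGen m (f i.succ.succ))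
        = (List.ofFn fun i : Fin (2*n) => dihedralGen m ((fun j : Fin (2*n) => f j.succ.succ) i)) from rfl,
      ihf]
    have hW : (W (eflip f) : ℕ) = (if f 0 then 0 else 1) + (if f 1 then 1 else 0)
        + W (eflip (fun j : Fin (2*n) => f j.succ.succ)) := by
      show (∑ i : Fin (2*n+1+1), if eflip f i then 1 else 0) = _
      rw [Fin.sum_univ_succ, Fin.sum_univ_succ]
      have e0 : eflip f 0 = !(f 0) := by simp [eflip]
      have e1 : eflip f (Fin.succ 0) = f 1 := by
        have : (Fin.succ (0 : Fin (2*n+1))).val = 1 := by simp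
        simp [eflip, this, Nat.mod_eq_of_lt (show 1 < 2*(n+1) by omega)]
      have e2 : ∀ i : Fin (2*n), eflip f i.succ.succ
          = eflip (fun j : Fin (2*n) => f j.succ.succ) i := by
        intro i
        simp only [eflip, Fin.val_succ]
        have : Even (i.val + 1 + 1) ↔ Even i.val := by
          rw [Nat.even_add_one, Nat.even_add_one]; tauto
        by_cases h : Even i.val <;> simp [h, this]
      rw [e0, e1]
      simp only [e2]
      have : Fin.succ (0 : Fin (2*n+1)) = 1 := rfl
      cases hf : f 0 <;> simp [W, hf] <;> ring
    have h1 : f (Fin.succ 0) = f 1 := rfl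
    rw [h1, hW]
    cases hf0 : f 0 <;> cases hf1 : f 1 <;>
      simp only [dihedralGen, if_true, if_false, Bool.false_eq_true, sr_mul_r, sr_mul_sr] <;>
      push_cast <;> congr 1 <;> ring

lemma eflip_invol {k : ℕ} (f : Fin k → Bool) : eflip (eflip f) = f := by
  funext i
  by_cases h : Even i.val <;> simp [eflip, h]

lemma W_le {s : ℕ} (g : Fin s → Bool) : W g ≤ s := by
  calc W g ≤ ∑ i : Fin s, 1 := Finset.sum_le_sum (fun i _ => by split <;> omega)
  _ = s := by simp

lemma count_weight (s w : ℕ) :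
    (Finset.univ.filter (fun g : Fin s → Bool => W g = w)).card = s.choose w := by
  rw [← Fintype.card_subtype]
  have e : {g : Fin s → Bool // W g = w} ≃ {S : Finset (Fin s) // S.card = w} :=
    { toFun := fun g => ⟨Finset.univ.filter (fun i => g.1 i = true), by
        have h := g.2
        simp only [W, Finset.sum_boole, Nat.cast_id] at h
        exact h⟩
      invFun := fun S => ⟨fun i => decide (i ∈ S.1), by
        simp [W, Finset.sum_boole, S.2]⟩
      left_inv := fun g => Subtype.ext (funext fun i => by simp)
      right_inv := fun S => Subtype.ext (by simp) }
  rw [Fintype.card_congr e, Fintype.card_finset_len, Fintype.card_fin]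

lemma Ncount (m n : ℕ) (hm : 2 ≤ m) :
    (Finset.univ.filter (fun f : Fin (2*n) → Bool =>
        ((W (eflip f) : ZMod m) = (n : ZMod m)))).card
      = ∑ k ∈ Finset.Icc (-((n/m : ℕ) : ℤ)) ((n/m : ℕ) : ℤ),
          (2*n).choose ((n : ℤ) - k*m).toNat := by
  have hm0 : (0:ℤ) < m := by exact_mod_cast Nat.lt_of_lt_of_le (by norm_num) hm
  -- step 1: remove the flip
  have step1 : (Finset.univ.filter (fun f : Fin (2*n) → Bool =>
        ((W (eflip f) : ZMod m) = (n : ZMod m)))).card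
      = (Finset.univ.filter (fun g : Fin (2*n) → Bool =>
        ((W g : ZMod m) = (n : ZMod m)))).card := by
    apply Finset.card_bij (fun f _ => eflip f)
    · intro f hf
      simp only [Finset.mem_filter, Finset.mem_univ, true_and] at hf ⊢
      exact hf
    · intro f hf f' hf' h
      have := congrArg eflip h
      rwa [eflip_invol, eflip_invol] at this
    · intro g hg
      simp only [Finset.mem_filter, Finset.mem_univ, true_and] at hg ⊢
      exact ⟨eflip g, by rw [eflip_invol]; exact hg, eflip_invol g⟩
  rw [step1]
  -- step 2: fiberwise by weight
  set T := (Finset.range (2*n+1)).filter (fun w : ℕ => ((w : ℕ) : ZMod m) = (n : ZMod m)) with hT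
  have step2 : (Finset.univ.filter (fun g : Fin (2*n) → Bool =>
        ((W g : ZMod m) = (n : ZMod m)))).card = ∑ w ∈ T, (2*n).choose w := by
    rw [Finset.card_eq_sum_card_fiberwise (f := W) (t := T)
      (fun g hg => by
        simp only [Finset.coe_filter, Finset.mem_univ, true_and, Set.mem_setOf_eq] at hg
        exact Finset.mem_filter.mpr ⟨Finset.mem_range.mpr (by have := W_le g; omega), hg⟩)]
    apply Finset.sum_congr rfl
    intro w hw
    rw [Finset.filter_filter, ← count_weight (2*n) w]
    congr 1
    apply Finset.filter_congr
    intro g _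
    simp only [hT, Finset.mem_filter, Finset.mem_range] at hw
    constructor
    · rintro ⟨_, h⟩; exact h
    · intro h; exact ⟨by rw [h]; exact hw.2, h⟩
  rw [step2]
  -- step 3: reindex
  refine Finset.sum_nbij' (fun w : ℕ => ((n : ℤ) - w) / m) (fun k : ℤ => ((n : ℤ) - k*m).toNat) ?_ ?_ ?_ ?_ ?_
  · intro w hw
    simp only [hT, Finset.mem_filter, Finset.mem_range] at hw
    obtain ⟨hw1, hw2⟩ := hw
    have hdvd : (m:ℤ) ∣ (n:ℤ) - w := by
      have := (ZMod.natCast_eq_natCast_iff w n m).mp hw2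
      have h2 := (Nat.modEq_iff_dvd).mp this
      exact_mod_cast h2
    set d := ((n:ℤ) - w) / m with hd
    have hdm : d * m = (n:ℤ) - w := Int.ediv_mul_cancel hdvd
    have hnm : ((n/m : ℕ) : ℤ) = (n:ℤ) / m := Int.natCast_div n m
    simp only [Finset.mem_Icc]
    constructor
    · rw [neg_le, hnm]
      rw [Int.le_ediv_iff_mul_le hm0]
      nlinarith [hdm]
    · rw [hnm, Int.le_ediv_iff_mul_le hm0]
      nlinarith [hdm]
  · intro k hk
    simp only [Finset.mem_Icc] at hk
    have hkm1 : k * m ≤ (n:ℤ) := by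
      calc k * m ≤ ((n/m : ℕ):ℤ) * m := by nlinarith [hk.2]
      _ ≤ n := by exact_mod_cast Nat.div_mul_le_self n m
    have hkm2 : -(n:ℤ) ≤ k * m := by
      calc -(n:ℤ) ≤ -(((n/m : ℕ):ℤ) * m) := by
            exact neg_le_neg (by exact_mod_cast Nat.div_mul_le_self n m)
      _ ≤ k * m := by nlinarith [hk.1]
    simp only [hT, Finset.mem_filter, Finset.mem_range]
    constructor
    · omega
    · have h0 : (0:ℤ) ≤ (n:ℤ) - k*m := by omega
      have : ((((n:ℤ) - k*m).toNat : ℕ) : ZMod m) = (((n:ℤ) - k*m : ℤ) : ZMod m) := by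
        rw [← Int.cast_natCast, Int.toNat_of_nonneg h0]
      rw [this]
      push_cast
      rw [ZMod.natCast_self]
      ring
  · intro w hw
    simp only [hT, Finset.mem_filter, Finset.mem_range] at hw
    have hdvd : (m:ℤ) ∣ (n:ℤ) - w := by
      have := (ZMod.natCast_eq_natCast_iff w n m).mp hw.2
      have h2 := (Nat.modEq_iff_dvd).mp this
      exact_mod_cast h2
    show ((n:ℤ) - ((n:ℤ) - (w:ℤ))/(m:ℤ) * m).toNat = w
    rw [Int.ediv_mul_cancel hdvd]
    omega
  · intro k hk
    simp only [Finset.mem_Icc] at hk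
    have hkm1 : k * m ≤ (n:ℤ) := by
      calc k * m ≤ ((n/m : ℕ):ℤ) * m := by nlinarith [hk.2]
      _ ≤ n := by exact_mod_cast Nat.div_mul_le_self n m
    show ((n:ℤ) - ((((n:ℤ) - k*m).toNat : ℕ) : ℤ))/(m:ℤ) = k
    rw [Int.toNat_of_nonneg (by omega), sub_sub_cancel, Int.mul_ediv_cancel _ (by omega)]
  · intro w hw
    simp only [hT, Finset.mem_filter, Finset.mem_range] at hw
    have hdvd : (m:ℤ) ∣ (n:ℤ) - w := by
      have := (ZMod.natCast_eq_natCast_iff w n m).mp hw.2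
      have h2 := (Nat.modEq_iff_dvd).mp this
      exact_mod_cast h2
    congr 1
    rw [Int.ediv_mul_cancel hdvd]
    omega

theorem expected_abs_length_simple_reflections_dihedral (m t : ℕ) (hm : 2 ≤ m) :
    (Odd t → dihedralExpAbsLenS m t = 1) ∧
    (Even t → dihedralExpAbsLenS m t =
      2 - (1 / (2 : ℝ) ^ ((t : ℤ) - 1)) *
        ∑ k ∈ Finset.Icc (-((t / (2 * m) : ℕ) : ℤ)) ((t / (2 * m) : ℕ) : ℤ),
          (t.choose (((t / 2 : ℕ) : ℤ) - k * m).toNat : ℝ)) := by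
  haveI : NeZero m := ⟨by omega⟩
  constructor
  · intro ht
    have hterm : ∀ f : Fin t → Bool,
        dAbsLen m (List.ofFn (fun i => dihedralGen m (f i))).prod = 1 := by
      intro f
      have hmem : ∀ x ∈ List.ofFn (fun i => dihedralGen m (f i)), ∃ j, x = sr j := by
        intro x hx
        rw [List.mem_ofFn] at hx
        obtain ⟨i, hi⟩ := hx
        cases hb : f i <;> rw [← hi] <;> simp [dihedralGen, hb]
      obtain ⟨j, hj⟩ := (prod_refl_parity m _ hmem).2 (by rw [List.length_ofFn]; exact ht)
      rw [hj, dAbsLen_sr]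
    unfold dihedralExpAbsLenS
    rw [Finset.sum_congr rfl (fun f _ => by rw [hterm f])]
    rw [Finset.sum_const, Finset.card_univ]
    simp only [Fintype.card_fun, Fintype.card_bool, Fintype.card_fin, Nat.cast_one, nsmul_eq_mul,
      mul_one]
    rw [Nat.cast_pow]
    push_cast
    rw [div_self (by positivity)]
  · intro ht
    obtain ⟨n, rfl⟩ : ∃ n, t = 2*n := by obtain ⟨a, ha⟩ := ht; exact ⟨a, by omega⟩
    have hterm : ∀ f : Fin (2*n) → Bool,
        (dAbsLen m (List.ofFn (fun i => dihedralGen m (f i))).prod : ℝ)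
        = if ((W (eflip f) : ZMod m) = (n : ZMod m)) then 0 else 2 := by
      intro f
      rw [key m n f, dAbsLen_r]
      by_cases h : (W (eflip f) : ZMod m) = (n : ZMod m)
      · rw [if_pos (sub_eq_zero.mpr h), if_pos h]; norm_num
      · rw [if_neg (fun hc => h (sub_eq_zero.mp hc)), if_neg h]; norm_num
    unfold dihedralExpAbsLenS
    rw [Finset.sum_congr rfl (fun f _ => hterm f), Finset.sum_ite]
    rw [Finset.sum_const, Finset.sum_const, smul_zero, zero_add]
    have hcard : (Finset.univ.filter (fun f : Fin (2*n) → Bool => ((W (eflip f) : ZMod m) = (n : ZMod m)))).card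
        + (Finset.univ.filter (fun f : Fin (2*n) → Bool => ¬ ((W (eflip f) : ZMod m) = (n : ZMod m)))).card = 2^(2*n) := by
      rw [Finset.card_filter_add_card_filter_not, Finset.card_univ]
      simp [Fintype.card_fun]
    have hN := Ncount m n hm
    -- index simplifications
    have h1 : (2*n)/2 = n := Nat.mul_div_cancel_left n (by norm_num)
    have h2 : (2*n)/(2*m) = n/m := Nat.mul_div_mul_left n m (by norm_num)
    rw [h1, h2]
    have hzpow : (2:ℝ) ^ (((2*n : ℕ) : ℤ) - 1) = (2:ℝ)^(2*n) / 2 := by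
      rw [zpow_sub₀ (by norm_num), zpow_natCast, zpow_one]
    rw [hzpow]
    have hsum : ∑ k ∈ Finset.Icc (-((n/m : ℕ) : ℤ)) ((n/m : ℕ) : ℤ),
          ((2*n).choose (((n:ℕ) : ℤ) - k * m).toNat : ℝ)
        = ((Finset.univ.filter (fun f : Fin (2*n) → Bool => ((W (eflip f) : ZMod m) = (n : ZMod m)))).card : ℝ) := by
      rw [hN]
      push_cast
      rfl
    rw [hsum]
    have hM : ((Finset.univ.filter (fun f : Fin (2*n) → Bool => ¬ ((W (eflip f) : ZMod m) = (n : ZMod m)))).card : ℝ)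
        = 2^(2*n) - ((Finset.univ.filter (fun f : Fin (2*n) → Bool => ((W (eflip f) : ZMod m) = (n : ZMod m)))).card : ℝ) := by
      have h2 : ((Finset.univ.filter (fun f : Fin (2*n) → Bool => ((W (eflip f) : ZMod m) = (n : ZMod m)))).card : ℝ)
          + ((Finset.univ.filter (fun f : Fin (2*n) → Bool => ¬ ((W (eflip f) : ZMod m) = (n : ZMod m)))).card : ℝ) = 2^(2*n) := by
        exact_mod_cast congrArg (Nat.cast : ℕ → ℝ) hcard
      linarith
    rw [nsmul_eq_mul, hM]
    have hpow : (0:ℝ) < 2^(2*n) := by positivity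
    field_simp
end

section
/- Let n ≥ 1, x ∈ ℝ, and define v^{(t)}: ℐ_n → ℝ by v^{(0)}_{ij} = sgn(j - i) and v^{(t+1)}_{ij} = x v^{(t)}_{ij} + ∑_{|i'| ≠ |j|} v^{(t)}_{i'j} + ∑_{|j'| ≠ |i|} v^{(t)}_{ij'}. Then v^{(t)}_{ij} = ((j - i - sgn j + sgn i)/(n-1)) (2n - 2 + x)^t + (sgn(j-i) - (j - i - sgn j + sgn i)/(n-1)) x^t. -/
/-- The index set `[-n, n] \ {0}` as a finset of integers. -/
noncomputable def signedIdx (n : ℕ) : Finset ℤ := (Finset.Icc (-(n : ℤ)) n).erase 0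

/-- Membership in `ℐₙ = {(i,j) : i,j ∈ [-n,n]\{0}, |i| ≠ |j|}`. -/
def memI (n : ℕ) (i j : ℤ) : Prop :=
  i ∈ signedIdx n ∧ j ∈ signedIdx n ∧ |i| ≠ |j|

/-- The operator `Q`: `(Qv)_{ij} = ∑_{|i'|≠|j|} v_{i'j} + ∑_{|j'|≠|i|} v_{ij'}`,
where `i', j'` run over `[-n,n]\{0}`. -/
noncomputable def QD (n : ℕ) (v : ℤ → ℤ → ℝ) : ℤ → ℤ → ℝ := fun i j =>
  (∑ i' ∈ (signedIdx n).filter (fun i' => |i'| ≠ |j|), v i' j)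
  + ∑ j' ∈ (signedIdx n).filter (fun j' => |j'| ≠ |i|), v i j'



lemma sum_sign_Icc (L U : ℤ) (hL : L ≤ 0) (hU : 0 ≤ U) :
    ∑ c ∈ Finset.Icc L U, c.sign = U + L := by
  have hsplit : Finset.Icc L U = Finset.Ico L 0 ∪ Finset.Icc 0 U := by
    ext c; simp only [Finset.mem_Icc, Finset.mem_union, Finset.mem_Ico]; omega
  have hdisj : Disjoint (Finset.Ico L 0) (Finset.Icc 0 U) := by
    simp only [Finset.disjoint_left, Finset.mem_Ico, Finset.mem_Icc]; omega
  rw [hsplit, Finset.sum_union hdisj]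
  have e1 : ∀ c ∈ Finset.Ico L (0:ℤ), Int.sign c = -1 := by
    intro c hc; simp only [Finset.mem_Ico] at hc
    exact Int.sign_eq_neg_one_of_neg hc.2
  have e2 : ∀ c ∈ Finset.Icc (1:ℤ) U, Int.sign c = 1 := by
    intro c hc; simp only [Finset.mem_Icc] at hc
    exact Int.sign_eq_one_of_pos hc.1
  have h1 : ∑ c ∈ Finset.Ico L 0, c.sign = L := by
    rw [Finset.sum_congr rfl e1, Finset.sum_const, Int.card_Ico]
    simp; omega
  have h2 : ∑ c ∈ Finset.Icc 0 U, c.sign = U := by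
    have hins : Finset.Icc (0:ℤ) U = insert 0 (Finset.Icc 1 U) := by
      ext c; simp only [Finset.mem_Icc, Finset.mem_insert]; omega
    rw [hins, Finset.sum_insert (by simp), Finset.sum_congr rfl e2,
      Finset.sum_const, Int.card_Icc]
    simp; omega
  rw [h1, h2]; ring


-- reindexed sign sum over full Icc
lemma sum_sign_sub_Icc (n : ℕ) (a : ℤ) (ha : -(n:ℤ) ≤ a) (ha' : a ≤ n) :
    ∑ b ∈ Finset.Icc (-(n:ℤ)) n, (a - b).sign = 2 * a := by
  have hre : (∑ b ∈ Finset.Icc (-(n:ℤ)) n, (a - b).sign)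
      = ∑ c ∈ Finset.Icc (a - n) (a + n), c.sign := by
    apply Finset.sum_nbij' (i := fun b => a - b) (j := fun c => a - c)
    case hi => intro b hb; simp only [Finset.mem_Icc] at *; omega
    case hj => intro c hc; simp only [Finset.mem_Icc] at *; omega
    case left_neg => intro b _; ring
    case right_neg => intro c _; ring
    case h => intro b _; rfl
  rw [hre]

  rw [sum_sign_Icc _ _ (by omega) (by omega)]; ring

lemma sum_sign_sub_signedIdx (n : ℕ) (a : ℤ) (ha : a ∈ signedIdx n) :
    ∑ b ∈ signedIdx n, (a - b).sign = 2 * a - a.sign := by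
  simp only [signedIdx, Finset.mem_erase, Finset.mem_Icc] at ha
  rw [signedIdx, Finset.sum_erase_eq_sub (by simp),
    sum_sign_sub_Icc n a ha.2.1 ha.2.2]
  simp

-- odd function sums to zero over signedIdx
lemma sum_odd_signedIdx (n : ℕ) (f : ℤ → ℤ) (hf : ∀ b, f (-b) = - f b) :
    ∑ b ∈ signedIdx n, f b = 0 := by
  apply Finset.sum_involution (fun b _ => -b)
  · intro b hb; rw [hf]; ring
  · intro b hb _ h
    simp only [signedIdx, Finset.mem_erase, Finset.mem_Icc] at hb
    omega
  · intro b _; exact neg_neg b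
  · intro b hb
    simp only [signedIdx, Finset.mem_erase, Finset.mem_Icc] at hb ⊢
    omega

lemma card_signedIdx (n : ℕ) (hn : 1 ≤ n) : (signedIdx n).card = 2 * n := by
  rw [signedIdx, Finset.card_erase_of_mem (by simp), Int.card_Icc]
  omega

lemma filter_eq_sdiff (n : ℕ) (a : ℤ) :
    (signedIdx n).filter (fun b => |b| ≠ |a|) = signedIdx n \ {a, -a} := by
  ext b
  simp only [Finset.mem_filter, Finset.mem_sdiff, Finset.mem_insert, Finset.mem_singleton]
  constructor
  · rintro ⟨hb, h⟩; exact ⟨hb, fun hcon => h (by rcases hcon with h1 | h1 <;> simp [h1, abs_neg])⟩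
  · rintro ⟨hb, h⟩; refine ⟨hb, fun hcon => h ?_⟩
    rcases abs_eq_abs.mp hcon with h1 | h1 <;> simp [h1]

lemma sum_filter_eq (n : ℕ) (a : ℤ) (ha : a ∈ signedIdx n) (f : ℤ → ℤ) :
    ∑ b ∈ (signedIdx n).filter (fun b => |b| ≠ |a|), f b
      = (∑ b ∈ signedIdx n, f b) - f a - f (-a) := by
  have ha0 : a ≠ 0 := by
    simp only [signedIdx, Finset.mem_erase] at ha; exact ha.1
  have hma : -a ∈ signedIdx n := by
    simp only [signedIdx, Finset.mem_erase, Finset.mem_Icc] at ha ⊢; omega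
  rw [filter_eq_sdiff, Finset.sum_sdiff_eq_sub (by
    intro b hb
    simp only [Finset.mem_insert, Finset.mem_singleton] at hb
    rcases hb with rfl | rfl <;> assumption)]
  rw [Finset.sum_insert (by simp; omega), Finset.sum_singleton]
  ring

lemma sum_sign_signedIdx (n : ℕ) : ∑ b ∈ signedIdx n, b.sign = 0 :=
  sum_odd_signedIdx n _ (fun b => Int.sign_neg b)

lemma sum_id_signedIdx (n : ℕ) : ∑ b ∈ signedIdx n, b = 0 :=
  sum_odd_signedIdx n _ (fun b => rfl)

-- B1 : signed difference sum over filter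
lemma sumB (n : ℕ) (a : ℤ) (ha : a ∈ signedIdx n) :
    ∑ b ∈ (signedIdx n).filter (fun b => |b| ≠ |a|), (a - b).sign
      = 2 * (a - a.sign) := by
  rw [sum_filter_eq n a ha, sum_sign_sub_signedIdx n a ha]
  have h1 : (a - a).sign = 0 := by simp
  have h2 : (a - -a).sign = a.sign := by
    rw [show a - -a = 2 * a by ring, Int.sign_mul,
      show Int.sign 2 = 1 from rfl, one_mul]
  rw [h1, h2]; ring

-- A1 : numerator sum over filter
lemma sumA (n : ℕ) (hn : 1 ≤ n) (c : ℤ) (a : ℤ) (ha : a ∈ signedIdx n) :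
    ∑ b ∈ (signedIdx n).filter (fun b => |b| ≠ |a|), (c - b + b.sign)
      = (2 * n - 2) * c := by
  rw [sum_filter_eq n a ha]
  have : ∑ b ∈ signedIdx n, (c - b + b.sign)
      = ∑ b ∈ signedIdx n, (c + (b.sign - b)) := by
    apply Finset.sum_congr rfl; intro b _; ring
  rw [this, Finset.sum_add_distrib, Finset.sum_const, card_signedIdx n hn,
    sum_odd_signedIdx n (fun b => b.sign - b) (fun b => by show (-b).sign - -b = -(b.sign - b); rw [Int.sign_neg]; ring)]
  have h0 : a ≠ 0 := by simp only [signedIdx, Finset.mem_erase] at ha; exact ha.1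
  rw [Int.sign_neg]
  push_cast
  ring

theorem recurrence_solution (n : ℕ) (hn : 2 ≤ n) (x : ℝ) (v : ℕ → ℤ → ℤ → ℝ)
    (h0 : ∀ i j, memI n i j → v 0 i j = ((j - i).sign : ℝ))
    (hrec : ∀ t i j, memI n i j → v (t + 1) i j = x * v t i j + QD n (v t) i j) :
    ∀ t i j, memI n i j →
      v t i j =
        ((j - i - j.sign + i.sign : ℤ) : ℝ) / ((n : ℝ) - 1) * (2 * n - 2 + x) ^ t
        + (((j - i).sign : ℝ) - ((j - i - j.sign + i.sign : ℤ) : ℝ) / ((n : ℝ) - 1)) * x ^ t := by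
  have hn2 : (2:ℝ) ≤ (n:ℝ) := by exact_mod_cast hn
  have hn1 : ((n:ℝ) - 1) ≠ 0 := by intro h; linarith
  intro t
  induction t with
  | zero =>
    intro i j hij
    rw [h0 i j hij]
    simp
  | succ t ih =>
    intro i j hij
    obtain ⟨hi, hj, hij'⟩ := hij
    set c : ℝ := ((2 * n - 2 + x) ^ t - x ^ t) / ((n : ℝ) - 1) with hc
    set d : ℝ := x ^ t with hd
    have hterm : ∀ i' j', memI n i' j' →
        v t i' j' = ((j' - i' - j'.sign + i'.sign : ℤ) : ℝ) * c
          + (((j' - i').sign : ℤ) : ℝ) * d := by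
      intro i' j' h
      rw [ih i' j' h, hc, hd]
      field_simp
      ring
    have hS1 : ∑ i' ∈ (signedIdx n).filter (fun i' => |i'| ≠ |j|), v t i' j
        = (((2 * n - 2) * (j - j.sign) : ℤ) : ℝ) * c
          + ((2 * (j - j.sign) : ℤ) : ℝ) * d := by
      rw [Finset.sum_congr rfl (fun i' h => hterm i' j (by
        simp only [Finset.mem_filter] at h
        exact ⟨h.1, hj, h.2⟩))]
      rw [Finset.sum_add_distrib, ← Finset.sum_mul, ← Finset.sum_mul,
        ← Int.cast_sum, ← Int.cast_sum]
      have e1 : ∑ i' ∈ (signedIdx n).filter (fun i' => |i'| ≠ |j|),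
          (j - i' - Int.sign j + Int.sign i') = (2 * n - 2) * (j - j.sign) := by
        rw [← sumA n (by omega) (j - j.sign) j hj]
        apply Finset.sum_congr rfl; intro b _; ring
      rw [e1, sumB n j hj]
    have hS2 : ∑ j' ∈ (signedIdx n).filter (fun j' => |j'| ≠ |i|), v t i j'
        = ((-((2 * n - 2) * (i - i.sign)) : ℤ) : ℝ) * c
          + ((-(2 * (i - i.sign)) : ℤ) : ℝ) * d := by
      rw [Finset.sum_congr rfl (fun j' h => hterm i j' (by
        simp only [Finset.mem_filter] at h
        exact ⟨hi, h.1, fun hcon => h.2 hcon.symm⟩))]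
      rw [Finset.sum_add_distrib, ← Finset.sum_mul, ← Finset.sum_mul,
        ← Int.cast_sum, ← Int.cast_sum]
      have e3 : ∑ j' ∈ (signedIdx n).filter (fun j' => |j'| ≠ |i|),
          (j' - i - Int.sign j' + Int.sign i) = -((2 * n - 2) * (i - i.sign)) := by
        rw [← sumA n (by omega) (i - i.sign) i hi, ← Finset.sum_neg_distrib]
        apply Finset.sum_congr rfl; intro b _; ring
      have e4 : ∑ j' ∈ (signedIdx n).filter (fun j' => |j'| ≠ |i|),
          (j' - i).sign = -(2 * (i - i.sign)) := by
        rw [← sumB n i hi, ← Finset.sum_neg_distrib]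
        apply Finset.sum_congr rfl; intro b _
        rw [show (i - b) = -(b - i) by ring, Int.sign_neg, neg_neg]
      rw [e3, e4]
    rw [hrec t i j ⟨hi, hj, hij'⟩, QD, hS1, hS2, ih i j ⟨hi, hj, hij'⟩, hc, hd]
    push_cast
    field_simp
    ring
end
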